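/- Let Q be a set of entailments satisfying EP-1. Suppose p and q are Q-preantecedents with p ⊏ q (proper prefix) and, for every channel α, either p_α = q_α or there is an output event ᾱ[a] occurring in q with p_α * ᾱ[a] ⊑ q_α (i.e., on every channel where they differ, the first event of q beyond p is an output). Then there is an output event β̄[b] occurring in q whose justification u — an entailment u ⊢ β̄[b] ∈ Q with u * β̄[b] ⊑ q — satisfies u ⊑ p. -/

import Mathlib

/-!
STATEMENT 9: if `Q` satisfies EP-1, and `p ⊏ q` are `Q`-preantecedents such
that on each channel where they differ the first event of `q` beyond `p` is an
output, then some output event of `q` is justified by an entailment whose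
antecedent is a prefix of `p`.
-/

namespace Stmt9

/-- Protocols over a set of atoms `At`: atoms, coproducts and products of
finite families (events are represented by positions in the list). -/
inductive Proto (At : Type) : Type where
  | atom : At → Proto At
  | sum : List (Proto At) → Proto At
  | prod : List (Proto At) → Proto At

/-- The three roles a protocol state may have. -/
inductive Role : Type where
  | src  -- source role 0
  | snk  -- sink role 1
  | flow -- flow role +
deriving DecidableEq

/-- Interchanging the source and sink roles. -/
def Role.swap : Role → Role
  | .src => .snk
  | .snk => .src
  | .flow => .flow

/-- The role of a coproduct state, from the roles of its components. -/
def sumRole (rs : List Role) : Role :=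
  if ∀ r ∈ rs, r = Role.src then .src
  else if rs.count Role.snk = 1 ∧ rs.count Role.flow = 0 then .snk
  else .flow

/-- The role of a product state, from the roles of its components. -/
def prodRole (rs : List Role) : Role :=
  if ∀ r ∈ rs, r = Role.snk then .snk
  else if rs.count Role.src = 1 ∧ rs.count Role.flow = 0 then .src
  else .flow

mutual
/-- The role of a protocol state on a domain channel. -/
def roleD {At : Type} : Proto At → Role
  | .atom _ => .flow
  | .sum Xs => sumRole (rolesD Xs)
  | .prod Xs => prodRole (rolesD Xs)

def rolesD {At : Type} : List (Proto At) → List Role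
  | [] => []
  | X :: Xs => roleD X :: rolesD Xs
end

/-- A channel is either a domain channel or a codomain channel. -/
inductive Side : Type where
  | dom
  | cod
deriving DecidableEq

/-- The role of a protocol state on a channel of the given side (codomain
roles are computed dually). -/
def role {At : Type} : Side → Proto At → Role
  | .dom, X => roleD X
  | .cod, X => (roleD X).swap

/-- Directions of events: input or output. -/
inductive Dir : Type where
  | inp
  | out
deriving DecidableEq

def Dir.flip : Dir → Dir
  | .inp => .out
  | .out => .inp

/-- An event: a direction together with the position of the selected
component. -/
abbrev Ev : Type := Dir × ℕ

/-- The subprotocol reached by a transition along event `i`. -/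
def Proto.next {At : Type} : Proto At → ℕ → Option (Proto At)
  | .atom _, _ => none
  | .sum Xs, i => Xs[i]?
  | .prod Xs, i => Xs[i]?

/-- The direction of events a protocol state expects, on a channel of the
given side (coproducts expect inputs on domain channels and outputs on
codomain channels; products dually). -/
def expects {At : Type} (s : Side) : Proto At → Option Dir
  | .sum _ => some (match s with | .dom => .inp | .cod => .out)
  | .prod _ => some (match s with | .dom => .out | .cod => .inp)
  | .atom _ => none

/-- A legal transition of a protocol state on a channel of side `s`: it starts
at a state with flow role, has the direction the state expects, and an output
transition does not end at a sink-role state while an input transition does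
not end at a source-role state. -/
def StepP {At : Type} (s : Side) (P : Proto At) (e : Ev) (P' : Proto At) : Prop :=
  role s P = .flow ∧ expects s P = some e.1 ∧ P.next e.2 = some P' ∧
    (e.1 = Dir.out → role s P' ≠ .snk) ∧ (e.1 = Dir.inp → role s P' ≠ .src)

/-- A legal channel behaviour: a finite sequence of legal transitions,
reaching the indicated state. -/
inductive StepsP {At : Type} (s : Side) : Proto At → List Ev → Proto At → Prop where
  | nil (P : Proto At) : StepsP s P [] P
  | cons {P P' P'' : Proto At} {e : Ev} {l : List Ev} :
      StepP s P e P' → StepsP s P' l P'' → StepsP s P (e :: l) P''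

def Proto.IsAtom {At : Type} : Proto At → Prop
  | .atom _ => True
  | _ => False

/-- A finite family of channels, each assigned a protocol and partitioned
into domain channels and codomain channels. -/
structure Setting (At Chan : Type) where
  active : Set Chan
  finite : active.Finite
  side : Chan → Side
  proto : Chan → Proto At

/-- A behaviour: a tuple of channel behaviours, one per channel. -/
abbrev Behav (Chan : Type) : Type := Chan → List Ev

variable {At Chan M : Type}

/-- The behaviour `p` reaches the frontier state `P` on channel `c`. -/
def Setting.Reaches (S : Setting At Chan) (p : Behav Chan) (c : Chan) (P : Proto At) : Prop :=
  StepsP (S.side c) (S.proto c) (p c) P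

/-- `p` is a legal behaviour for the setting `S`. -/
def Setting.IsBehav (S : Setting At Chan) (p : Behav Chan) : Prop :=
  (∀ c ∉ S.active, p c = []) ∧ ∀ c ∈ S.active, ∃ P, S.Reaches p c P

/-- An antecedent behaviour: every frontier state has flow or sink role. -/
def Setting.Antecedent (S : Setting At Chan) (p : Behav Chan) : Prop :=
  S.IsBehav p ∧ ∀ c ∈ S.active, ∀ P, S.Reaches p c P → role (S.side c) P ≠ .src

/-- A saturated behaviour: every frontier state is atomic, has sink role,
or is an output state with flow role. -/
def Setting.Saturated (S : Setting At Chan) (p : Behav Chan) : Prop :=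
  S.IsBehav p ∧ ∀ c ∈ S.active, ∀ P, S.Reaches p c P →
    P.IsAtom ∨ role (S.side c) P = .snk ∨
      (expects (S.side c) P = some Dir.out ∧ role (S.side c) P = .flow)

/-- `p ⊑ q`: componentwise prefix of behaviours. -/
def BPrefix (p q : Behav Chan) : Prop := ∀ c, p c <+: q c

/-- `p ⊑_i q`: `p` is a prefix of `q` and all intervening events are inputs. -/
def BPrefixI (p q : Behav Chan) : Prop :=
  ∀ c, ∃ r : List Ev, q c = p c ++ r ∧ ∀ e ∈ r, e.1 = Dir.inp

/-- Compatibility `p ⌣ q` of behaviours. -/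
def Compat (p q : Behav Chan) : Prop := ∀ c, p c <+: q c ∨ q c <+: p c

/-- The join `p ⊔ q` of (compatible) behaviours: the longer component on each
channel. -/
def bjoin (p q : Behav Chan) : Behav Chan :=
  fun c => if (p c).length ≤ (q c).length then q c else p c

/-- The empty behaviour. -/
def emptyB : Behav Chan := fun _ => []

/-- `p * e` on channel `c`: append the event `e` at the end of the channel
behaviour of `c`. -/
def bapp [DecidableEq Chan] (p : Behav Chan) (c : Chan) (e : Ev) : Behav Chan :=
  Function.update p c (p c ++ [e])

/-- `e * p` on channel `c`: prepend the event `e` at the beginning of the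
channel behaviour of `c`. -/
def bpre [DecidableEq Chan] (c : Chan) (e : Ev) (p : Behav Chan) : Behav Chan :=
  Function.update p c (e :: p c)

/-- The conclusion of an entailment: an output event `ᾱ[a]` or an atomic
morphism. -/
inductive Concl (Chan M : Type) : Type where
  | out : Chan → ℕ → Concl Chan M
  | mor : M → Concl Chan M

/-- An entailment: an antecedent behaviour together with a conclusion. -/
abbrev Ent (Chan M : Type) : Type := Behav Chan × Concl Chan M

/-- The event `e` is a legal next event on channel `c` given the behaviour
`p`. -/
def Setting.CanStep (S : Setting At Chan) (p : Behav Chan) (c : Chan) (e : Ev) : Prop :=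
  ∃ P P', S.Reaches p c P ∧ StepP (S.side c) P e P'

/-- Validity of an entailment: the antecedent is an antecedent behaviour and
the conclusion is a legal output event, resp. an atomic morphism on the
(all-atomic) frontier. -/
def Setting.ValidEnt (S : Setting At Chan) : Ent Chan M → Prop
  | (p, .out α a) => S.Antecedent p ∧ α ∈ S.active ∧ S.CanStep p α (Dir.out, a)
  | (p, .mor _) => S.Antecedent p ∧ ∀ c ∈ S.active, ∃ A, S.Reaches p c (.atom A)

/-- A set of entailments. -/
def EntSet (S : Setting At Chan) (Q : Set (Ent Chan M)) : Prop :=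
  ∀ e ∈ Q, S.ValidEnt e

/-- All output events occurring in `p` are `Q`-justified. -/
def Justified [DecidableEq Chan] (S : Setting At Chan) (Q : Set (Ent Chan M))
    (p : Behav Chan) : Prop :=
  ∀ c ∈ S.active, ∀ (l : List Ev) (a : ℕ) (r : List Ev), p c = l ++ (Dir.out, a) :: r →
    ∃ u : Behav Chan, (u, Concl.out c a) ∈ Q ∧ u c = l ∧ BPrefix (bapp u c (Dir.out, a)) p

/-- A `Q`-preantecedent: a `Q`-justified antecedent behaviour. -/
def Preant [DecidableEq Chan] (S : Setting At Chan) (Q : Set (Ent Chan M))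
    (p : Behav Chan) : Prop :=
  S.Antecedent p ∧ Justified S Q p

/-- A `Q`-antecedent: the antecedent of some entailment of `Q`. -/
def QAnt (Q : Set (Ent Chan M)) (p : Behav Chan) : Prop := ∃ x, (p, x) ∈ Q

section EP

variable [DecidableEq Chan]

/-- EP-1: every `Q`-antecedent is `Q`-justified. -/
def EP1 (S : Setting At Chan) (Q : Set (Ent Chan M)) : Prop :=
  ∀ p, QAnt Q p → Justified S Q p

/-- EP-2: compatible entailments with equal channel behaviour on the output
channel conclude the same output event. -/
def EP2 (Q : Set (Ent Chan M)) : Prop :=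
  ∀ (p q : Behav Chan) (α : Chan) (a b : ℕ),
    (p, Concl.out α a) ∈ Q → (q, Concl.out α b) ∈ Q → p α = q α → Compat p q → a = b

/-- EP-3: between a preantecedent and a saturated preantecedent above it along
inputs there is a `Q`-antecedent. -/
def EP3 (S : Setting At Chan) (Q : Set (Ent Chan M)) : Prop :=
  ∀ p q, Preant S Q p → Preant S Q q → S.Saturated q → BPrefixI p q →
    ∃ p', QAnt Q p' ∧ BPrefixI p p' ∧ BPrefixI p' q

/-- EP-4. -/
def EP4 (Q : Set (Ent Chan M)) : Prop :=
  ∀ (α β : Chan) (a b : ℕ) (p q : Behav Chan), α ≠ β →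
    (p, Concl.out α a) ∈ Q → (q, Concl.out β b) ∈ Q → p α = q α → BPrefix p q →
    (bapp q α (Dir.out, a), Concl.out β b) ∈ Q

/-- EP-5. -/
def EP5 (S : Setting At Chan) (Q : Set (Ent Chan M)) : Prop :=
  ∀ (α β : Chan) (a b : ℕ) (p : Behav Chan), α ≠ β →
    (p, Concl.out α a) ∈ Q → β ∈ S.active → S.CanStep p β (Dir.inp, b) →
    (bapp p β (Dir.inp, b), Concl.out α a) ∈ Q

/-- EP-6. -/
def EP6 (Q : Set (Ent Chan M)) : Prop :=
  ∀ (α β : Chan) (a b : ℕ) (p : Behav Chan), α ≠ β →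
    (bapp p β (Dir.out, b), Concl.out α a) ∈ Q → (p, Concl.out α a) ∈ Q

/-- EP-7. -/
def EP7 (S : Setting At Chan) (Q : Set (Ent Chan M)) : Prop :=
  ∀ (α β : Chan) (a : ℕ) (p : Behav Chan), α ≠ β → Preant S Q p → β ∈ S.active →
    (∃ b, S.CanStep p β (Dir.inp, b)) →
    (∀ b, S.CanStep p β (Dir.inp, b) → (bapp p β (Dir.inp, b), Concl.out α a) ∈ Q) →
    (p, Concl.out α a) ∈ Q

/-- A proto-process: a set of entailments satisfying EP-1, EP-2 and EP-3. -/
def ProtoProcess (S : Setting At Chan) (Q : Set (Ent Chan M)) : Prop :=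
  EntSet S Q ∧ EP1 S Q ∧ EP2 Q ∧ EP3 S Q

/-- An extensional process: a set of entailments satisfying EP-1 – EP-7. -/
def ExtProcess (S : Setting At Chan) (Q : Set (Ent Chan M)) : Prop :=
  ProtoProcess S Q ∧ EP4 Q ∧ EP5 S Q ∧ EP6 Q ∧ EP7 S Q

end EP


private lemma aux_jwp {At Chan M : Type} [DecidableEq Chan]
    (S : Setting At Chan) (Q : Set (Ent Chan M)) (h1 : EP1 S Q)
    (p q : Behav Chan) (hq : Preant S Q q) (hpq : BPrefix p q)
    (hch : ∀ c ∈ S.active, p c = q c ∨ ∃ (a : ℕ) (r : List Ev), q c = p c ++ (Dir.out, a) :: r) :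
    ∀ (n : ℕ) (u : Behav Chan) (β : Chan) (b : ℕ),
      (∑ c ∈ S.finite.toFinset, (u c).length) ≤ n →
      β ∈ S.active → (u, Concl.out β b) ∈ Q → u β = p β →
      BPrefix (bapp u β (Dir.out, b)) q →
      ∃ β' ∈ S.active, ∃ (b' : ℕ) (u' : Behav Chan),
        (u', Concl.out β' b') ∈ Q ∧ BPrefix (bapp u' β' (Dir.out, b')) q ∧ BPrefix u' p := by
  intro n
  induction n with
  | zero =>
    intro u β b hn hβ hmem huβ hbq
    -- u ⊑ q
    have huq : ∀ c, u c <+: q c := by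
      intro c
      by_cases hc : c = β
      · subst hc; rw [huβ]; exact hpq c
      · have := hbq c
        simpa [bapp, Function.update_of_ne hc] using this
    by_cases hup : ∀ c, u c <+: p c
    · exact ⟨β, hβ, b, u, hmem, hbq, hup⟩
    · exfalso
      push_neg at hup
      obtain ⟨d, hd⟩ := hup
      -- u d is nonempty, so d is active, so the sum is ≥ 1 — contradiction with ≤ 0
      have hdq := huq d
      have hpd : p d <+: u d := (List.prefix_or_prefix_of_prefix (hpq d) hdq).resolve_right hd
      have hdact : d ∈ S.active := by
        by_contra hda
        have hq0 : q d = [] := hq.1.1.1 d hda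
        have : u d = [] := List.prefix_nil.mp (hq0 ▸ hdq)
        exact hd (by simp [this])
      have hune : u d ≠ [] := by
        intro h
        apply hd
        rw [h]; exact List.nil_prefix
      have : 1 ≤ ∑ c ∈ S.finite.toFinset, (u c).length := by
        have hdm : d ∈ S.finite.toFinset := S.finite.mem_toFinset.mpr hdact
        calc 1 ≤ (u d).length := by
                cases hul : u d with
                | nil => exact absurd hul hune
                | cons x xs => simp
             _ ≤ _ := Finset.single_le_sum (f := fun c => (u c).length)
                        (fun i _ => Nat.zero_le _) hdm
      omega
  | succ n ih =>
    intro u β b hn hβ hmem huβ hbq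
    have huq : ∀ c, u c <+: q c := by
      intro c
      by_cases hc : c = β
      · subst hc; rw [huβ]; exact hpq c
      · have := hbq c
        simpa [bapp, Function.update_of_ne hc] using this
    by_cases hup : ∀ c, u c <+: p c
    · exact ⟨β, hβ, b, u, hmem, hbq, hup⟩
    · push_neg at hup
      obtain ⟨d, hd⟩ := hup
      have hdq := huq d
      have hpd : p d <+: u d := (List.prefix_or_prefix_of_prefix (hpq d) hdq).resolve_right hd
      have hdact : d ∈ S.active := by
        by_contra hda
        have hq0 : q d = [] := hq.1.1.1 d hda
        have : u d = [] := List.prefix_nil.mp (hq0 ▸ hdq)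
        exact hd (by simp [this])
      -- on channel d, p ≠ q so the first event beyond p is an output
      obtain ⟨a, r, hqd⟩ : ∃ (a : ℕ) (r : List Ev), q d = p d ++ (Dir.out, a) :: r := by
        rcases hch d hdact with heq | h
        · exact absurd (heq ▸ hdq) hd
        · exact h
      -- u d = p d ++ (Dir.out, a) :: s'
      obtain ⟨s, hs⟩ := hpd
      have hsne : s ≠ [] := by
        intro h; apply hd; rw [← hs, h, List.append_nil]
      obtain ⟨t, ht⟩ := hdq
      rw [← hs, List.append_assoc, hqd] at ht
      have hst : s ++ t = (Dir.out, a) :: r := List.append_cancel_left ht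
      obtain ⟨e, s', rfl⟩ : ∃ e s', s = e :: s' := by
        cases s with
        | nil => exact absurd rfl hsne
        | cons e s' => exact ⟨e, s', rfl⟩
      have he : e = (Dir.out, a) := by
        have := hst
        simp only [List.cons_append, List.cons.injEq] at this
        exact this.1
      subst he
      have hud : u d = p d ++ (Dir.out, a) :: s' := hs.symm
      -- u is a Q-antecedent, hence Q-justified
      have hjust : Justified S Q u := h1 u ⟨Concl.out β b, hmem⟩
      obtain ⟨u', hmem', hu'd, hbu⟩ := hjust d hdact (p d) a s' hud
      -- new antecedent's justified extension is below q
      have hbq' : BPrefix (bapp u' d (Dir.out, a)) q :=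
        fun c => (hbu c).trans (huq c)
      -- measure decreases
      have hlt : (∑ c ∈ S.finite.toFinset, (u' c).length)
          < ∑ c ∈ S.finite.toFinset, (u c).length := by
        apply Finset.sum_lt_sum
        · intro x _
          by_cases hx : x = d
          · rw [hx]
            have h := hbu d
            rw [bapp, Function.update_self] at h
            have := h.length_le
            simp at this; omega
          · have h := hbu x
            rw [bapp, Function.update_of_ne hx] at h
            exact h.length_le
        · refine ⟨d, S.finite.mem_toFinset.mpr hdact, ?_⟩
          have := hbu d
          rw [bapp, Function.update_self] at this
          have := this.length_le
          simp at this
          omega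
      exact ih u' d a (by omega) hdact hmem' hu'd hbq'

theorem justification_within_prefix {At Chan M : Type} [DecidableEq Chan]
    (S : Setting At Chan) (Q : Set (Ent Chan M))
    (hQ : EntSet S Q) (h1 : EP1 S Q) :
    ∀ p q, Preant S Q p → Preant S Q q → BPrefix p q → p ≠ q →
      (∀ c ∈ S.active, p c = q c ∨ ∃ (a : ℕ) (r : List Ev), q c = p c ++ (Dir.out, a) :: r) →
      ∃ β ∈ S.active, ∃ (b : ℕ) (u : Behav Chan),
        (u, Concl.out β b) ∈ Q ∧ BPrefix (bapp u β (Dir.out, b)) q ∧ BPrefix u p := by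
  intro p q hp hq hpq hneq hch
  -- pick a channel where p and q differ
  obtain ⟨c, hc⟩ : ∃ c, p c ≠ q c := Function.ne_iff.mp hneq
  have hcact : c ∈ S.active := by
    by_contra hca
    exact hc ((hp.1.1.1 c hca).trans (hq.1.1.1 c hca).symm)
  obtain ⟨a, r, hqc⟩ : ∃ (a : ℕ) (r : List Ev), q c = p c ++ (Dir.out, a) :: r := by
    rcases hch c hcact with heq | h
    · exact absurd heq hc
    · exact h
  -- q is Q-justified, so this output has a justification
  obtain ⟨u, hmem, huc, hbq⟩ := hq.2 c hcact (p c) a r hqc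
  exact aux_jwp S Q h1 p q hq hpq hch (∑ c ∈ S.finite.toFinset, (u c).length)
    u c a le_rfl hcact hmem huc hbq

end Stmt9
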